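/- In the ring of formal power series over ℚ in algebraically independent graded indeterminates X_1, X_2, …, the signed identity ∑_{k ≥ 1, k odd} ((−1)^{(k−1)/2}/k) · ∑_{n ≥ 1, n odd} ((−1)^{(n−1)/2}/n) · ∑_{d ∣ n} μ(d) · X_{k·d}^{n/d} = ∑_{m ≥ 1, m odd} (−1)^{(m−1)/2} X_1^m / m holds, where μ is the Möbius function. -/

import Mathlib

open Classical MvPowerSeries ArithmeticFunction

/-- The product (coefficientwise) topology on formal power series in countably
many algebraically independent indeterminates `X_0, X_1, X_2, …`; with respect
to it, infinite sums of series are computed coefficientwise, each coefficient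
receiving only finitely many nonzero contributions. -/
noncomputable instance : TopologicalSpace (MvPowerSeries ℕ ℚ) :=
  inferInstanceAs (TopologicalSpace ((ℕ →₀ ℕ) → ℚ))

instance : T3Space (MvPowerSeries ℕ ℚ) := inferInstanceAs (T3Space ((ℕ →₀ ℕ) → ℚ))
instance : ContinuousAdd (MvPowerSeries ℕ ℚ) :=
  inferInstanceAs (ContinuousAdd ((ℕ →₀ ℕ) → ℚ))

namespace AltPleth

noncomputable def sg (m : ℕ) : ℚ := (-1 : ℚ) ^ ((m - 1) / 2)

noncomputable def F (k n : ℕ) : MvPowerSeries ℕ ℚ :=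
  if Odd k ∧ Odd n then
    (((-1 : ℚ) ^ ((k - 1) / 2) / k) * ((-1 : ℚ) ^ ((n - 1) / 2) / n)) •
      ∑ d ∈ n.divisors, ((moebius d : ℚ)) •
        ((MvPowerSeries.X (k * d) : MvPowerSeries ℕ ℚ) ^ (n / d))
  else 0

noncomputable def G (m : ℕ) : MvPowerSeries ℕ ℚ :=
  if Odd m then
    ((-1 : ℚ) ^ ((m - 1) / 2) / m) •
      ((MvPowerSeries.X 1 : MvPowerSeries ℕ ℚ) ^ m)
  else 0

def w (e : ℕ →₀ ℕ) : ℕ := e.sum fun j r => j * r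

lemma w_single (j r : ℕ) : w (Finsupp.single j r) = j * r := by
  simp [w, Finsupp.sum_single_index]

lemma coeff_F (k n : ℕ) (e : ℕ →₀ ℕ) :
    MvPowerSeries.coeff e (F k n) =
      if Odd k ∧ Odd n then
        ((sg k / k) * (sg n / n)) *
          ∑ d ∈ n.divisors, (moebius d : ℚ) *
            (if e = Finsupp.single (k * d) (n / d) then 1 else 0)
      else 0 := by
  unfold F sg
  split
  · simp only [map_smul, map_sum, smul_eq_mul, MvPowerSeries.coeff_X_pow, Finset.mul_sum]
  · simp

lemma coeff_G (m : ℕ) (e : ℕ →₀ ℕ) :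
    MvPowerSeries.coeff e (G m) =
      if Odd m then (sg m / m) * (if e = Finsupp.single 1 m then 1 else 0)
      else 0 := by
  unfold G sg
  split
  · rw [map_smul, MvPowerSeries.coeff_X_pow]; simp [smul_eq_mul]
  · simp

lemma sg_mul {a b : ℕ} (ha : Odd a) (hb : Odd b) : sg a * sg b = sg (a * b) := by
  obtain ⟨x, rfl⟩ := ha
  obtain ⟨y, rfl⟩ := hb
  have h1 : (2 * x + 1 - 1) / 2 = x := by omega
  have h2 : (2 * y + 1 - 1) / 2 = y := by omega
  have h3 : (2 * x + 1) * (2 * y + 1) = 2 * (2 * x * y + x + y) + 1 := by ring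
  have h4 : ((2 * x + 1) * (2 * y + 1) - 1) / 2 = 2 * x * y + x + y := by omega
  rw [sg, sg, sg, h1, h2, h4, ← pow_add]
  have : x + y + 2 * (x * y) = 2 * x * y + x + y := by ring
  rw [← this]
  simp [pow_add, pow_mul]

lemma odd_of_dvd {d n : ℕ} (hn : Odd n) (hd : d ∣ n) : Odd d := by
  obtain ⟨c, rfl⟩ := hd
  exact (Nat.odd_mul.mp hn).1

lemma sum_moebius_cast (j : ℕ) :
    ∑ d ∈ j.divisors, (moebius d : ℚ) = if j = 1 then 1 else 0 := by
  have := congrArg (fun f : ArithmeticFunction ℚ => f j)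
    (ArithmeticFunction.coe_moebius_mul_coe_zeta (R := ℚ))
  simp only [ArithmeticFunction.coe_mul_zeta_apply, ArithmeticFunction.one_apply,
    ArithmeticFunction.intCoe_apply] at this
  exact this

lemma indicator_iff {j r k n d : ℕ} (hr : 0 < r) (hd : d ∣ n) (hn : n ≠ 0) :
    (Finsupp.single j r : ℕ →₀ ℕ) = Finsupp.single (k * d) (n / d) ↔
      (k * d = j ∧ n = d * r) := by
  constructor
  · intro h
    rcases (Finsupp.single_eq_single_iff _ _ _ _).1 h with ⟨hj, hrd⟩ | ⟨h0, _⟩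
    · exact ⟨hj.symm, by rw [hrd, Nat.mul_div_cancel' hd]⟩
    · omega
  · rintro ⟨h1, h2⟩
    have hd0 : 0 < d := by
      rcases Nat.eq_zero_or_pos d with h | h
      · subst h; simp at h2; omega
      · exact h
    rw [← h1, h2, Nat.mul_div_cancel_left _ hd0]

lemma G_sum (j r : ℕ) (hr : 0 < r) :
    ∑ m ∈ Finset.range (j * r + 1),
        MvPowerSeries.coeff (Finsupp.single j r) (G m)
      = if j = 1 ∧ Odd r then sg r / r else 0 := by
  have hcong : ∀ m ∈ Finset.range (j * r + 1),
      MvPowerSeries.coeff (Finsupp.single j r) (G m)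
        = if m = r then (if j = 1 ∧ Odd r then sg r / r else 0) else 0 := by
    intro m _
    rw [coeff_G]
    by_cases h1 : Odd m
    · by_cases h2 : (Finsupp.single j r : ℕ →₀ ℕ) = Finsupp.single 1 m
      · rcases (Finsupp.single_eq_single_iff _ _ _ _).1 h2 with ⟨hj, hrm⟩ | ⟨h0, _⟩
        · subst hj
          subst hrm
          simp [h1]
        · omega
      · rw [if_pos h1, if_neg h2, mul_zero]
        by_cases h3 : m = r
        · subst h3
          rw [if_pos rfl, if_neg]
          rintro ⟨rfl, -⟩
          exact h2 rfl
        · rw [if_neg h3]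
    · rw [if_neg h1, eq_comm]
      split_ifs with h3 h4
      · exact absurd (h3 ▸ h4.2) h1
      · rfl
      · rfl
  rw [Finset.sum_congr rfl hcong, Finset.sum_ite_eq' (Finset.range (j * r + 1)) r]
  by_cases hc : j = 1 ∧ Odd r
  · rw [if_pos]
    rw [Finset.mem_range, hc.1, one_mul]
    omega
  · simp [hc]


lemma F_sum (j r : ℕ) (hr : 0 < r) :
    ∑ p ∈ (Finset.range (j * r + 1)) ×ˢ (Finset.range (j * r + 1)),
        MvPowerSeries.coeff (Finsupp.single j r) (F p.1 p.2)
      = if j = 1 ∧ Odd r then sg r / r else 0 := by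
  classical
  have hterm : ∀ k n : ℕ,
      MvPowerSeries.coeff (Finsupp.single j r) (F k n)
        = ∑ d ∈ n.divisors,
            (if (Odd k ∧ Odd n) ∧ k * d = j ∧ n = d * r
              then (sg k / k) * (sg n / n) * (moebius d : ℚ) else 0) := by
    intro k n
    rw [coeff_F]
    split_ifs with h
    · rw [Finset.mul_sum]
      refine Finset.sum_congr rfl fun d hd => ?_
      obtain ⟨hdvd, hn0⟩ := Nat.mem_divisors.1 hd
      by_cases h2 : k * d = j ∧ n = d * r
      · rw [if_pos ((indicator_iff hr hdvd hn0).2 h2), if_pos ⟨h, h2⟩]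
        ring
      · rw [if_neg (fun hc => h2 ((indicator_iff hr hdvd hn0).1 hc)),
          if_neg (fun hc => h2 hc.2), mul_zero, mul_zero]
    · exact (Finset.sum_eq_zero fun d _ => if_neg (fun hc => h hc.1)).symm
  rw [Finset.sum_congr rfl fun p _ => hterm p.1 p.2, Finset.sum_sigma']
  by_cases hodd : Odd j ∧ Odd r
  · obtain ⟨hoj, hor⟩ := hodd
    have hj0 : 0 < j := hoj.pos
    set S := ((Finset.range (j * r + 1)) ×ˢ (Finset.range (j * r + 1))).sigma
      (fun p => p.2.divisors) with hS
    have hfilter : ∑ x ∈ S,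
        (if (Odd x.1.1 ∧ Odd x.1.2) ∧ x.1.1 * x.2 = j ∧ x.1.2 = x.2 * r
          then (sg x.1.1 / x.1.1) * (sg x.1.2 / x.1.2) * (moebius x.2 : ℚ) else 0)
      = ∑ x ∈ S.filter
          (fun x => (Odd x.1.1 ∧ Odd x.1.2) ∧ x.1.1 * x.2 = j ∧ x.1.2 = x.2 * r),
        (if (Odd x.1.1 ∧ Odd x.1.2) ∧ x.1.1 * x.2 = j ∧ x.1.2 = x.2 * r
          then (sg x.1.1 / x.1.1) * (sg x.1.2 / x.1.2) * (moebius x.2 : ℚ) else 0) := by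
      refine (Finset.sum_filter_of_ne fun x _ hx => ?_).symm
      by_contra hc
      exact hx (if_neg hc)
    rw [hfilter]
    have hbij : ∑ x ∈ S.filter
          (fun x => (Odd x.1.1 ∧ Odd x.1.2) ∧ x.1.1 * x.2 = j ∧ x.1.2 = x.2 * r),
        (if (Odd x.1.1 ∧ Odd x.1.2) ∧ x.1.1 * x.2 = j ∧ x.1.2 = x.2 * r
          then (sg x.1.1 / x.1.1) * (sg x.1.2 / x.1.2) * (moebius x.2 : ℚ) else 0)
      = ∑ d ∈ j.divisors, (sg (j * r) / (j * r)) * (moebius d : ℚ) := by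
      refine Finset.sum_bij' (fun x _ => x.2)
        (fun d _ => ⟨(j / d, d * r), d⟩) ?_ ?_ ?_ ?_ ?_
      · rintro ⟨⟨k, n⟩, d⟩ hx
        obtain ⟨-, ⟨-, hkd, -⟩⟩ := Finset.mem_filter.1 hx
        exact Nat.mem_divisors.2 ⟨Dvd.intro_left k hkd, hj0.ne'⟩
      · intro d hd
        obtain ⟨hdvd, -⟩ := Nat.mem_divisors.1 hd
        have hd0 : 0 < d := Nat.pos_of_mem_divisors hd
        have hdle : d ≤ j := Nat.le_of_dvd hj0 hdvd
        refine Finset.mem_filter.2 ⟨Finset.mem_sigma.2 ⟨Finset.mem_product.2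
          ⟨Finset.mem_range.2 ?_, Finset.mem_range.2 ?_⟩, ?_⟩, ?_, ?_, rfl⟩
        · show j / d < j * r + 1
          have h1 : j / d ≤ j := Nat.div_le_self j d
          have h2 : j ≤ j * r := Nat.le_mul_of_pos_right j hr
          omega
        · show d * r < j * r + 1
          have h1 : d * r ≤ j * r := Nat.mul_le_mul_right r hdle
          omega
        · exact Nat.mem_divisors.2 ⟨dvd_mul_right d r, by positivity⟩
        · exact ⟨odd_of_dvd hoj (Nat.div_dvd_of_dvd hdvd), Nat.odd_mul.2
            ⟨odd_of_dvd hoj hdvd, hor⟩⟩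
        · exact Nat.div_mul_cancel hdvd
      · rintro ⟨⟨k, n⟩, d⟩ hx
        obtain ⟨hmem, ⟨-, -⟩, hkd, hn⟩ := Finset.mem_filter.1 hx
        obtain ⟨-, hdmem⟩ := Finset.mem_sigma.1 hmem
        have hd0 : 0 < d := Nat.pos_of_mem_divisors hdmem
        have hk : j / d = k := by rw [← hkd, Nat.mul_div_cancel k hd0]
        simp only [hk, ← hn]
      · intro d hd
        rfl
      · rintro ⟨⟨k, n⟩, d⟩ hx
        obtain ⟨hmem, ⟨hko, hno⟩, hkd, hn⟩ := Finset.mem_filter.1 hx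
        dsimp only at hko hno hkd hn ⊢
        rw [if_pos ⟨⟨hko, hno⟩, hkd, hn⟩]
        have hkn : k * n = j * r := by rw [hn, ← mul_assoc, hkd]
        rw [div_mul_div_comm, sg_mul hko hno, ← Nat.cast_mul, hkn, Nat.cast_mul]
    rw [hbij, ← Finset.mul_sum, sum_moebius_cast]
    by_cases hj1 : j = 1
    · subst hj1
      rw [if_pos rfl, if_pos ⟨rfl, hor⟩, mul_one, one_mul]
      norm_num
    · rw [if_neg hj1, if_neg (fun hc : j = 1 ∧ Odd r => hj1 hc.1), mul_zero]
  · rw [if_neg (fun hc : j = 1 ∧ Odd r => hodd ⟨hc.1 ▸ odd_one, hc.2⟩)]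
    refine Finset.sum_eq_zero fun x hx => if_neg ?_
    rintro ⟨⟨hk, hn⟩, hkd, hnd⟩
    obtain ⟨hd, hr'⟩ := Nat.odd_mul.mp (hnd ▸ hn)
    exact hodd ⟨hkd ▸ Nat.odd_mul.mpr ⟨hk, hd⟩, hr'⟩


lemma key (e : ℕ →₀ ℕ) :
    ∑ p ∈ (Finset.range (w e + 1)) ×ˢ (Finset.range (w e + 1)),
        MvPowerSeries.coeff e (F p.1 p.2)
      = ∑ m ∈ Finset.range (w e + 1), MvPowerSeries.coeff e (G m) := by
  by_cases hE : ∃ j r, 0 < r ∧ e = Finsupp.single j r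
  · obtain ⟨j, r, hr, rfl⟩ := hE
    rw [w_single, F_sum j r hr, G_sum j r hr]
  · rw [Finset.sum_eq_zero, Finset.sum_eq_zero]
    · intro m _
      rw [coeff_G]
      split_ifs with h1 h2
      · exact absurd ⟨1, m, h1.pos, h2⟩ hE
      · exact mul_zero _
      · rfl
    · rintro ⟨k, n⟩ -
      rw [coeff_F]
      split_ifs with h1
      · rw [Finset.sum_eq_zero, mul_zero]
        intro d hd
        obtain ⟨hdvd, hn0⟩ := Nat.mem_divisors.1 hd
        have hd0 : 0 < d := Nat.pos_of_mem_divisors hd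
        have hpos : 0 < n / d := Nat.div_pos (Nat.le_of_dvd (Nat.pos_of_ne_zero hn0) hdvd) hd0
        rw [if_neg (fun hc => hE ⟨k * d, n / d, hpos, hc⟩), mul_zero]
      · rfl

lemma coeff_F_bound {e : ℕ →₀ ℕ} {k n : ℕ}
    (h : MvPowerSeries.coeff e (F k n) ≠ 0) : k ≤ w e ∧ n ≤ w e := by
  rw [coeff_F] at h
  split_ifs at h with hodd
  · obtain ⟨hk, hn⟩ := hodd
    have hS : (∑ d ∈ n.divisors, (moebius d : ℚ) *
        (if e = Finsupp.single (k * d) (n / d) then 1 else 0)) ≠ 0 := by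
      intro h0
      exact h (by rw [h0, mul_zero])
    obtain ⟨d, hd, hne⟩ := Finset.exists_ne_zero_of_sum_ne_zero hS
    have hind : e = Finsupp.single (k * d) (n / d) := by
      by_contra hc
      rw [if_neg hc, mul_zero] at hne
      exact hne rfl
    obtain ⟨hdvd, hn0⟩ := Nat.mem_divisors.1 hd
    have hwe : w e = k * n := by
      rw [hind, w_single, mul_assoc, Nat.mul_div_cancel' hdvd]
    constructor
    · rw [hwe]; exact Nat.le_mul_of_pos_right k hn.pos
    · rw [hwe]; exact Nat.le_mul_of_pos_left n hk.pos
  · exact absurd rfl h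

lemma coeff_G_bound {e : ℕ →₀ ℕ} {m : ℕ}
    (h : MvPowerSeries.coeff e (G m) ≠ 0) : m ≤ w e := by
  rw [coeff_G] at h
  by_cases hodd : Odd m
  · rw [if_pos hodd] at h
    have hind : e = Finsupp.single 1 m := by
      by_contra hc
      rw [if_neg hc, mul_zero] at h
      exact h rfl
    rw [hind, w_single, one_mul]
  · rw [if_neg hodd] at h
    exact absurd rfl h

end AltPleth

open AltPleth

/-- The alternating analogue:
`∑_{k odd} ((−1)^{(k−1)/2}/k) ∑_{n odd} ((−1)^{(n−1)/2}/n) ∑_{d|n} μ(d) X_{kd}^{n/d}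
  = ∑_{m odd} (−1)^{(m−1)/2} X_1^m / m`,
i.e. the alternating odd power-sum plethysm with the alternating odd Lie
characters equals `arctan p_1`; `X_d` plays the role of the power sum `p_d`. -/
theorem alt_odd_powersum_pleth_alt_odd_Lie :
    (∑' (k : ℕ), ∑' (n : ℕ),
        (if Odd k ∧ Odd n then
            (((-1 : ℚ) ^ ((k - 1) / 2) / k) * ((-1 : ℚ) ^ ((n - 1) / 2) / n)) •
              ∑ d ∈ n.divisors, ((moebius d : ℚ)) •
                ((MvPowerSeries.X (k * d) : MvPowerSeries ℕ ℚ) ^ (n / d))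
          else 0))
      = ∑' (m : ℕ),
          if Odd m then
            ((-1 : ℚ) ^ ((m - 1) / 2) / m) •
              ((MvPowerSeries.X 1 : MvPowerSeries ℕ ℚ) ^ m)
          else 0 := by
  have main : (∑' (k : ℕ), ∑' (n : ℕ), F k n) = ∑' (m : ℕ), G m := by
    set R : MvPowerSeries ℕ ℚ :=
      fun e => ∑ m ∈ Finset.range (w e + 1), MvPowerSeries.coeff e (G m) with hR
    have hG : HasSum G R := by
      refine Pi.hasSum.mpr fun e => ?_
      exact hasSum_sum_of_ne_finset_zero
        (f := fun m => MvPowerSeries.coeff e (G m)) fun m hm => by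
          by_contra h
          exact hm (Finset.mem_range.2 (by have := coeff_G_bound h; omega))
    have hF : HasSum (fun p : ℕ × ℕ => F p.1 p.2) R := by
      refine Pi.hasSum.mpr fun e => ?_
      have h1 := hasSum_sum_of_ne_finset_zero (L := SummationFilter.unconditional _)
        (f := fun p : ℕ × ℕ => MvPowerSeries.coeff e (F p.1 p.2))
        (s := (Finset.range (w e + 1)) ×ˢ (Finset.range (w e + 1)))
        (fun p hp => by
          by_contra h
          obtain ⟨h1, h2⟩ := coeff_F_bound h
          exact hp (Finset.mem_product.2
            ⟨Finset.mem_range.2 (by omega), Finset.mem_range.2 (by omega)⟩))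
      rw [key e] at h1
      exact h1
    have hFk : ∀ k, Summable fun n => F k n := by
      intro k
      refine Pi.summable.mpr fun e => ?_
      exact (hasSum_sum_of_ne_finset_zero (L := SummationFilter.unconditional _)
        (f := fun n => MvPowerSeries.coeff e (F k n))
        (s := Finset.range (w e + 1))
        (fun n hn => by
          by_contra h
          exact hn (Finset.mem_range.2 (by have := (coeff_F_bound h).2; omega)))).summable
    rw [← Summable.tsum_prod' hF.summable hFk, hF.tsum_eq, hG.tsum_eq]
  exact main
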